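/- (No entanglement via a commuting mediator) Let H = A ⊗ I ⊗ D + I ⊗ B ⊗ D′ be a Hamiltonian on ℂ^{d_A} ⊗ ℂ^{d_B} ⊗ ℂ^{d_C}, where A and B are Hermitian matrices and D, D′ are real diagonal matrices on ℂ^{d_C}. Let ρ(0) = ρ_{AB} ⊗ ρ_C, where ρ_{AB} is a separable density matrix on ℂ^{d_A} ⊗ ℂ^{d_B} and ρ_C is a density matrix on ℂ^{d_C}. Then for every real t, the reduced state tr_C( exp(−itH) ρ(0) exp(itH) ) is separable; in particular, this mediated dynamics can never generate entanglement between A and B. -/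

import Mathlib

open scoped Matrix Kronecker ComplexOrder

noncomputable section

/-- Hermitian inner product on `n → ℂ` (conjugate-linear in the first argument). -/
def cinner {n : Type*} [Fintype n] (v w : n → ℂ) : ℂ :=
  ∑ i, (starRingEnd ℂ) (v i) * w i

/-- Tensor (Kronecker) product of vectors. -/
def tensorVec {α β : Type*} (v : α → ℂ) (w : β → ℂ) : α × β → ℂ :=
  fun p => v p.1 * w p.2

/-- The projector `|v⟩⟨v|`. -/
def vecProj {n : Type*} (v : n → ℂ) : Matrix n n ℂ :=
  Matrix.of fun i j => v i * (starRingEnd ℂ) (v j)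

/-- A density matrix: positive semidefinite with unit trace. -/
def IsDensityMatrix {n : Type*} [Fintype n] (ρ : Matrix n n ℂ) : Prop :=
  ρ.PosSemidef ∧ ρ.trace = 1

open Classical in
/-- Positive semidefinite square root (0 on non-PSD input). -/
def msqrt {n : Type*} [Fintype n] [DecidableEq n] (ρ : Matrix n n ℂ) : Matrix n n ℂ :=
  if h : ρ.PosSemidef then
    (h.1.eigenvectorUnitary : Matrix n n ℂ) *
      Matrix.diagonal ((↑) ∘ Real.sqrt ∘ h.1.eigenvalues) *
      (star (h.1.eigenvectorUnitary : Matrix n n ℂ)) else 0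

/-- Uhlmann root fidelity `F(ρ,σ) = tr √(√ρ σ √ρ)`. -/
def rootFidelity {n : Type*} [Fintype n] [DecidableEq n] (ρ σ : Matrix n n ℂ) : ℝ :=
  ((msqrt (msqrt ρ * σ * msqrt ρ)).trace).re

/-- Partial trace over the second tensor factor. -/
def ptraceC {α γ : Type*} [Fintype γ] (ρ : Matrix (α × γ) (α × γ) ℂ) : Matrix α α ℂ :=
  Matrix.of fun i j => ∑ k, ρ (i, k) (j, k)

/-- Partial trace over the first tensor factor. -/
def ptraceA {α β : Type*} [Fintype α] (ρ : Matrix (α × β) (α × β) ℂ) : Matrix β β ℂ :=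
  Matrix.of fun i j => ∑ k, ρ (k, i) (k, j)

/-- Partial transpose on the second tensor factor. -/
def ptB {α β : Type*} (ρ : Matrix (α × β) (α × β) ℂ) : Matrix (α × β) (α × β) ℂ :=
  Matrix.of fun p q => ρ (p.1, q.2) (q.1, p.2)

open Classical in
/-- Negativity: the sum of the absolute values of the negative eigenvalues of
the partial transpose (0 if the partial transpose is not Hermitian). -/
def negativity {α β : Type*} [Fintype α] [Fintype β] [DecidableEq α] [DecidableEq β]
    (ρ : Matrix (α × β) (α × β) ℂ) : ℝ :=
  if h : (ptB ρ).IsHermitian then ∑ i, max 0 (- h.eigenvalues i) else 0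

/-- A family of vectors is an orthonormal basis family (orthonormal, indexed by the
same finite type as the dimension, hence a basis). -/
def IsONB {n : Type*} [Fintype n] [DecidableEq n] (x : n → n → ℂ) : Prop :=
  ∀ j k, cinner (x j) (x k) = if j = k then 1 else 0

/-- Separability: a finite convex combination of projectors onto product unit vectors. -/
def IsSeparableDM {α β : Type*} [Fintype α] [Fintype β]
    (ρ : Matrix (α × β) (α × β) ℂ) : Prop :=
  ∃ (m : ℕ) (p : Fin m → ℝ) (a : Fin m → α → ℂ) (b : Fin m → β → ℂ),
    (∀ j, 0 ≤ p j) ∧ (∑ j, p j = 1) ∧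
    (∀ j, cinner (a j) (a j) = 1) ∧ (∀ j, cinner (b j) (b j) = 1) ∧
    ρ = ∑ j, (p j : ℂ) • vecProj (tensorVec (a j) (b j))

/-- A maximally entangled state on `ℂ^d ⊗ ℂ^d`. -/
def IsMaxEnt {d : ℕ} (Ψ : Fin d × Fin d → ℂ) : Prop :=
  ∃ x y : Fin d → Fin d → ℂ, IsONB x ∧ IsONB y ∧
    Ψ = ((Real.sqrt d : ℂ)⁻¹) • ∑ j, tensorVec (x j) (y j)

namespace MedAux

open Matrix NormedSpace

variable {α β γ : Type*} [Fintype α] [Fintype β] [Fintype γ]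
  [DecidableEq α] [DecidableEq β] [DecidableEq γ]

lemma kron_diagonal (X : Matrix α α ℂ) (d : γ → ℂ) :
    X ⊗ₖ Matrix.diagonal d = Matrix.blockDiagonal (fun k => d k • X) := by
  ext ⟨p, k⟩ ⟨q, l⟩
  simp only [kroneckerMap_apply, blockDiagonal_apply, diagonal_apply, Matrix.smul_apply, smul_eq_mul]
  split <;> simp [mul_comm]

def kronRightOne (β : Type*) [Fintype β] [DecidableEq β] :
    Matrix α α ℂ →+* Matrix (α × β) (α × β) ℂ where
  toFun M := M ⊗ₖ (1 : Matrix β β ℂ)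
  map_one' := Matrix.one_kronecker_one
  map_mul' M N := by rw [← Matrix.mul_kronecker_mul, Matrix.one_mul]
  map_zero' := Matrix.zero_kronecker _
  map_add' M N := Matrix.add_kronecker M N 1

def kronLeftOne (α : Type*) [Fintype α] [DecidableEq α] :
    Matrix β β ℂ →+* Matrix (α × β) (α × β) ℂ where
  toFun N := (1 : Matrix α α ℂ) ⊗ₖ N
  map_one' := Matrix.one_kronecker_one
  map_mul' M N := by rw [← Matrix.mul_kronecker_mul, Matrix.one_mul]
  map_zero' := Matrix.kronecker_zero _
  map_add' M N := Matrix.kronecker_add 1 M N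

lemma continuous_kronRightOne :
    Continuous (kronRightOne (α := α) β) := by
  apply continuous_matrix
  intro i j
  exact ((continuous_apply_apply i.1 j.1).comp continuous_id).mul continuous_const

lemma continuous_kronLeftOne :
    Continuous (kronLeftOne (β := β) α) := by
  apply continuous_matrix
  intro i j
  exact continuous_const.mul ((continuous_apply_apply i.2 j.2).comp continuous_id)

lemma exp_kron_one (M : Matrix α α ℂ) :
    exp (M ⊗ₖ (1 : Matrix β β ℂ)) = exp M ⊗ₖ (1 : Matrix β β ℂ) := by
  letI : SeminormedRing (Matrix α α ℂ) := Matrix.linftyOpSemiNormedRing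
  letI : NormedRing (Matrix α α ℂ) := Matrix.linftyOpNormedRing
  letI : NormedAlgebra ℂ (Matrix α α ℂ) := Matrix.linftyOpNormedAlgebra
  letI : SeminormedRing (Matrix (α × β) (α × β) ℂ) := Matrix.linftyOpSemiNormedRing
  letI : NormedRing (Matrix (α × β) (α × β) ℂ) := Matrix.linftyOpNormedRing
  letI : NormedAlgebra ℂ (Matrix (α × β) (α × β) ℂ) := Matrix.linftyOpNormedAlgebra
  exact (map_exp_of_mem_ball (𝕂 := ℂ) (kronRightOne β) continuous_kronRightOne M
    ((expSeries_radius_eq_top ℂ (Matrix α α ℂ)).symm ▸ edist_lt_top _ _)).symm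

lemma exp_one_kron (N : Matrix β β ℂ) :
    exp ((1 : Matrix α α ℂ) ⊗ₖ N) = (1 : Matrix α α ℂ) ⊗ₖ exp N := by
  letI : SeminormedRing (Matrix β β ℂ) := Matrix.linftyOpSemiNormedRing
  letI : NormedRing (Matrix β β ℂ) := Matrix.linftyOpNormedRing
  letI : NormedAlgebra ℂ (Matrix β β ℂ) := Matrix.linftyOpNormedAlgebra
  letI : SeminormedRing (Matrix (α × β) (α × β) ℂ) := Matrix.linftyOpSemiNormedRing
  letI : NormedRing (Matrix (α × β) (α × β) ℂ) := Matrix.linftyOpNormedRing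
  letI : NormedAlgebra ℂ (Matrix (α × β) (α × β) ℂ) := Matrix.linftyOpNormedAlgebra
  exact (map_exp_of_mem_ball (𝕂 := ℂ) (kronLeftOne α) continuous_kronLeftOne N
    ((expSeries_radius_eq_top ℂ (Matrix β β ℂ)).symm ▸ edist_lt_top _ _)).symm

lemma exp_block (c u v : ℂ) (A : Matrix α α ℂ) (B : Matrix β β ℂ) :
    exp (c • (u • (A ⊗ₖ (1 : Matrix β β ℂ)) + v • ((1 : Matrix α α ℂ) ⊗ₖ B)))
      = exp ((c * u) • A) ⊗ₖ exp ((c * v) • B) := by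
  have h1 : c • (u • (A ⊗ₖ (1 : Matrix β β ℂ)) + v • ((1 : Matrix α α ℂ) ⊗ₖ B))
      = ((c * u) • A) ⊗ₖ (1 : Matrix β β ℂ) + (1 : Matrix α α ℂ) ⊗ₖ ((c * v) • B) := by
    rw [smul_add, smul_smul, smul_smul, Matrix.smul_kronecker, Matrix.kronecker_smul]
  have hc : Commute (((c * u) • A) ⊗ₖ (1 : Matrix β β ℂ))
      ((1 : Matrix α α ℂ) ⊗ₖ ((c * v) • B)) := by
    unfold Commute SemiconjBy
    rw [← Matrix.mul_kronecker_mul, ← Matrix.mul_kronecker_mul, Matrix.one_mul, Matrix.mul_one,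
      Matrix.one_mul, Matrix.mul_one]
  rw [h1, Matrix.exp_add_of_commute _ _ hc, exp_kron_one, exp_one_kron,
    ← Matrix.mul_kronecker_mul, Matrix.one_mul, Matrix.mul_one]

lemma exp_smul_herm_conjT {A : Matrix α α ℂ} (hA : A.IsHermitian) (z : ℂ) :
    (exp (z • A))ᴴ = exp ((starRingEnd ℂ z) • A) := by
  rw [← Matrix.exp_conjTranspose, Matrix.conjTranspose_smul, hA.eq, starRingEnd_apply]

lemma exp_mul_exp_neg (X : Matrix α α ℂ) : exp (-X) * exp X = 1 := by
  rw [← Matrix.exp_add_of_commute (-X) X ((Commute.refl X).neg_left),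
    neg_add_cancel]
  exact exp_zero

lemma vecProj_tensor (a : α → ℂ) (b : β → ℂ) :
    vecProj (tensorVec a b) = vecProj a ⊗ₖ vecProj b := by
  ext ⟨i, k⟩ ⟨j, l⟩
  simp only [vecProj, tensorVec, Matrix.of_apply, kroneckerMap_apply, _root_.map_mul]
  ring

lemma kron_conjTranspose (P : Matrix α α ℂ) (Q : Matrix β β ℂ) :
    (P ⊗ₖ Q)ᴴ = Pᴴ ⊗ₖ Qᴴ := by
  ext ⟨i, k⟩ ⟨j, l⟩
  simp [conjTranspose_apply]

lemma mul_vecProj_mul (P : Matrix α α ℂ) (v : α → ℂ) :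
    P * vecProj v * Pᴴ = vecProj (P.mulVec v) := by
  ext i j
  simp only [Matrix.mul_apply, vecProj, Matrix.of_apply, conjTranspose_apply,
    Matrix.mulVec, dotProduct, map_sum, _root_.map_mul, Finset.sum_mul, Finset.mul_sum]
  refine Finset.sum_congr rfl fun s _ => Finset.sum_congr rfl fun r _ => ?_
  simp only [starRingEnd_apply]
  ring

lemma cinner_mulVec_self (P : Matrix α α ℂ) (hP : Pᴴ * P = 1) (v : α → ℂ) :
    cinner (P.mulVec v) (P.mulVec v) = cinner v v := by
  have h1 : ∀ (u w : α → ℂ), cinner u w = dotProduct (star u) w := by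
    intro u w; rfl
  rw [h1, h1, Matrix.star_mulVec, dotProduct_mulVec, Matrix.vecMul_vecMul,
    hP, Matrix.vecMul_one]

lemma ptraceC_blockconj (V W : γ → Matrix α α ℂ) (X : Matrix α α ℂ) (C : Matrix γ γ ℂ) :
    ptraceC (Matrix.blockDiagonal V * (X ⊗ₖ C) * Matrix.blockDiagonal W)
      = ∑ k, C k k • (V k * X * W k) := by
  ext i j
  simp only [ptraceC, Matrix.of_apply, Matrix.sum_apply, Matrix.smul_apply, smul_eq_mul,
    Matrix.mul_apply, Matrix.blockDiagonal_apply, kroneckerMap_apply,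
    Fintype.sum_prod_type, ite_mul, mul_ite, zero_mul, mul_zero,
    Finset.sum_ite_eq, Finset.sum_ite_eq', Finset.mem_univ, if_true,
    Finset.sum_mul, Finset.mul_sum]
  refine Finset.sum_congr rfl fun k _ => ?_
  refine Finset.sum_congr rfl fun r _ => Finset.sum_congr rfl fun s _ => by ring

lemma diag_nonneg {M : Matrix α α ℂ} (hM : M.PosSemidef) (k : α) : 0 ≤ M k k := by
  exact hM.diag_nonneg

end MedAux

set_option maxHeartbeats 1000000 in
/-- no entanglement via a commuting mediator: for
`H = A ⊗ I ⊗ D + I ⊗ B ⊗ D'` with `D, D'` real diagonal, and an initial state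
`ρ_{AB} ⊗ ρ_C` with separable `ρ_{AB}`, the reduced state of `AB` stays separable
at all times. -/
theorem commuting_mediator_no_entanglement (dA dB dC : ℕ)
    (A : Matrix (Fin dA) (Fin dA) ℂ) (B : Matrix (Fin dB) (Fin dB) ℂ)
    (hA : A.IsHermitian) (hB : B.IsHermitian)
    (f f' : Fin dC → ℝ)
    (H : Matrix ((Fin dA × Fin dB) × Fin dC) ((Fin dA × Fin dB) × Fin dC) ℂ)
    (hH : H = (A ⊗ₖ (1 : Matrix (Fin dB) (Fin dB) ℂ)) ⊗ₖ
                Matrix.diagonal (fun k => ((f k : ℝ) : ℂ)) +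
              ((1 : Matrix (Fin dA) (Fin dA) ℂ) ⊗ₖ B) ⊗ₖ
                Matrix.diagonal (fun k => ((f' k : ℝ) : ℂ)))
    (ρAB : Matrix (Fin dA × Fin dB) (Fin dA × Fin dB) ℂ)
    (hρAB : IsDensityMatrix ρAB) (hsep : IsSeparableDM ρAB)
    (ρC : Matrix (Fin dC) (Fin dC) ℂ) (hρC : IsDensityMatrix ρC) :
    ∀ t : ℝ,
      IsSeparableDM (ptraceC
        (NormedSpace.exp ((-(Complex.I * (t : ℂ))) • H) * (ρAB ⊗ₖ ρC) *
          NormedSpace.exp ((Complex.I * (t : ℂ)) • H))) := by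
  intro t
  obtain ⟨hρCpsd, hρCtr⟩ := hρC
  obtain ⟨m, p, a, b, hp, hpsum, ha, hb, hρeq⟩ := hsep
  -- block-diagonal form of H
  have hHbd : H = Matrix.blockDiagonal (fun k =>
      ((f k : ℂ) • (A ⊗ₖ (1 : Matrix (Fin dB) (Fin dB) ℂ)) +
       (f' k : ℂ) • ((1 : Matrix (Fin dA) (Fin dA) ℂ) ⊗ₖ B))) := by
    rw [hH, MedAux.kron_diagonal, MedAux.kron_diagonal, ← Matrix.blockDiagonal_add]
    rfl
  -- exponential of c • H
  have hexp : ∀ c : ℂ, NormedSpace.exp (c • H) =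
      Matrix.blockDiagonal (fun k =>
        NormedSpace.exp ((c * (f k : ℂ)) • A) ⊗ₖ NormedSpace.exp ((c * (f' k : ℂ)) • B)) := by
    intro c
    letI : SeminormedRing (Matrix (Fin dA × Fin dB) (Fin dA × Fin dB) ℂ) :=
      Matrix.linftyOpSemiNormedRing
    letI : NormedRing (Matrix (Fin dA × Fin dB) (Fin dA × Fin dB) ℂ) :=
      Matrix.linftyOpNormedRing
    letI : NormedAlgebra ℂ (Matrix (Fin dA × Fin dB) (Fin dA × Fin dB) ℂ) :=
      Matrix.linftyOpNormedAlgebra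
    rw [hHbd, ← Matrix.blockDiagonal_smul, Matrix.exp_blockDiagonal]
    exact congrArg Matrix.blockDiagonal (funext fun k =>
      (NormedSpace.map_exp_of_mem_ball (𝕂 := ℂ) (Pi.evalRingHom _ k) (continuous_apply _) _
        ((NormedSpace.expSeries_radius_eq_top ℂ
          (Fin dC → Matrix (Fin dA × Fin dB) (Fin dA × Fin dB) ℂ)).symm ▸ edist_lt_top _ _)).trans
        (MedAux.exp_block c (f k) (f' k) A B))
  set P : Fin dC → Matrix (Fin dA) (Fin dA) ℂ :=
    fun k => NormedSpace.exp ((-(Complex.I * (t : ℂ)) * (f k : ℂ)) • A) with hP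
  set Q : Fin dC → Matrix (Fin dB) (Fin dB) ℂ :=
    fun k => NormedSpace.exp ((-(Complex.I * (t : ℂ)) * (f' k : ℂ)) • B) with hQ
  -- conjugate relation
  have hconj : ∀ (k : Fin dC),
      NormedSpace.exp ((Complex.I * (t : ℂ) * (f k : ℂ)) • A) ⊗ₖ
        NormedSpace.exp ((Complex.I * (t : ℂ) * (f' k : ℂ)) • B)
      = (P k ⊗ₖ Q k)ᴴ := by
    intro k
    have h1 : Complex.I * (t : ℂ) * (f k : ℂ)
        = (starRingEnd ℂ) (-(Complex.I * (t : ℂ)) * (f k : ℂ)) := by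
      simp only [_root_.map_mul, map_neg, Complex.conj_ofReal, Complex.conj_I]
      ring
    have h2 : Complex.I * (t : ℂ) * (f' k : ℂ)
        = (starRingEnd ℂ) (-(Complex.I * (t : ℂ)) * (f' k : ℂ)) := by
      simp only [_root_.map_mul, map_neg, Complex.conj_ofReal, Complex.conj_I]
      ring
    rw [MedAux.kron_conjTranspose, hP, hQ,
      MedAux.exp_smul_herm_conjT hA, MedAux.exp_smul_herm_conjT hB, h1, h2]
  -- unitarity
  have hPu : ∀ k, (P k)ᴴ * P k = 1 := by
    intro k
    rw [hP, MedAux.exp_smul_herm_conjT hA]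
    have : (starRingEnd ℂ) (-(Complex.I * (t : ℂ)) * (f k : ℂ)) • A
        = -((-(Complex.I * (t : ℂ)) * (f k : ℂ)) • A) := by
      rw [← neg_smul]
      congr 1
      simp only [_root_.map_mul, map_neg, Complex.conj_ofReal, Complex.conj_I]
      ring
    rw [this]
    exact MedAux.exp_mul_exp_neg _
  have hQu : ∀ k, (Q k)ᴴ * Q k = 1 := by
    intro k
    rw [hQ, MedAux.exp_smul_herm_conjT hB]
    have : (starRingEnd ℂ) (-(Complex.I * (t : ℂ)) * (f' k : ℂ)) • B
        = -((-(Complex.I * (t : ℂ)) * (f' k : ℂ)) • B) := by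
      rw [← neg_smul]
      congr 1
      simp only [_root_.map_mul, map_neg, Complex.conj_ofReal, Complex.conj_I]
      ring
    rw [this]
    exact MedAux.exp_mul_exp_neg _
  -- the reduced state
  have hred : ptraceC
      (NormedSpace.exp ((-(Complex.I * (t : ℂ))) • H) * (ρAB ⊗ₖ ρC) *
        NormedSpace.exp ((Complex.I * (t : ℂ)) • H))
      = ∑ k, ρC k k • ((P k ⊗ₖ Q k) * ρAB * (P k ⊗ₖ Q k)ᴴ) := by
    rw [hexp, hexp]
    have h2 : (Matrix.blockDiagonal fun k =>
        NormedSpace.exp ((Complex.I * (t : ℂ) * (f k : ℂ)) • A) ⊗ₖ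
          NormedSpace.exp ((Complex.I * (t : ℂ) * (f' k : ℂ)) • B))
        = Matrix.blockDiagonal fun k => (P k ⊗ₖ Q k)ᴴ :=
      congrArg Matrix.blockDiagonal (funext hconj)
    rw [h2]
    exact MedAux.ptraceC_blockconj _ _ _ _
  rw [hred]
  -- diagonal weights of ρC
  set w : Fin dC → ℝ := fun k => (ρC k k).re with hw
  have hwc : ∀ k, ((w k : ℝ) : ℂ) = ρC k k := by
    intro k
    have h0 := MedAux.diag_nonneg hρCpsd k
    rw [Complex.nonneg_iff] at h0
    exact Complex.ext rfl h0.2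
  have hw0 : ∀ k, 0 ≤ w k := by
    intro k
    have h0 := MedAux.diag_nonneg hρCpsd k
    rw [Complex.nonneg_iff] at h0
    exact h0.1
  have hwsum : ∑ k, w k = 1 := by
    have : (∑ k, ρC k k) = 1 := hρCtr
    have := congrArg Complex.re this
    simpa [hw, Complex.re_sum] using this
  -- rewrite each conjugated term
  have hterm : ∀ k, (P k ⊗ₖ Q k) * ρAB * (P k ⊗ₖ Q k)ᴴ
      = ∑ j, (p j : ℂ) • vecProj (tensorVec ((P k).mulVec (a j)) ((Q k).mulVec (b j))) := by
    intro k
    rw [hρeq, Matrix.mul_sum, Matrix.sum_mul]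
    refine Finset.sum_congr rfl fun j _ => ?_
    rw [Matrix.mul_smul, Matrix.smul_mul]
    congr 1
    rw [MedAux.vecProj_tensor, MedAux.vecProj_tensor, MedAux.kron_conjTranspose,
      ← Matrix.mul_kronecker_mul, ← Matrix.mul_kronecker_mul,
      MedAux.mul_vecProj_mul, MedAux.mul_vecProj_mul]
  -- final witness
  refine ⟨dC * m,
    fun i => w (finProdFinEquiv.symm i).1 * p (finProdFinEquiv.symm i).2,
    fun i => (P (finProdFinEquiv.symm i).1).mulVec (a (finProdFinEquiv.symm i).2),
    fun i => (Q (finProdFinEquiv.symm i).1).mulVec (b (finProdFinEquiv.symm i).2),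
    fun i => mul_nonneg (hw0 _) (hp _), ?_, ?_, ?_, ?_⟩
  · calc ∑ i : Fin (dC * m), w (finProdFinEquiv.symm i).1 * p (finProdFinEquiv.symm i).2
        = ∑ q : Fin dC × Fin m, w q.1 * p q.2 :=
          Fintype.sum_equiv finProdFinEquiv.symm _ _ (fun i => rfl)
      _ = 1 := by
          rw [Fintype.sum_prod_type]
          simp_rw [← Finset.mul_sum, hpsum, mul_one]
          exact hwsum
  · intro i
    exact (MedAux.cinner_mulVec_self _ (hPu _) _).trans (ha _)
  · intro i
    exact (MedAux.cinner_mulVec_self _ (hQu _) _).trans (hb _)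
  · calc ∑ k, ρC k k • ((P k ⊗ₖ Q k) * ρAB * (P k ⊗ₖ Q k)ᴴ)
        = ∑ k, ∑ j, ((w k * p j : ℝ) : ℂ) •
            vecProj (tensorVec ((P k).mulVec (a j)) ((Q k).mulVec (b j))) := by
          refine Finset.sum_congr rfl fun k _ => ?_
          rw [hterm k, Finset.smul_sum]
          refine Finset.sum_congr rfl fun j _ => ?_
          rw [smul_smul, ← hwc k, Complex.ofReal_mul]
      _ = ∑ q : Fin dC × Fin m, ((w q.1 * p q.2 : ℝ) : ℂ) •
            vecProj (tensorVec ((P q.1).mulVec (a q.2)) ((Q q.1).mulVec (b q.2))) :=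
          (Fintype.sum_prod_type (fun q : Fin dC × Fin m => ((w q.1 * p q.2 : ℝ) : ℂ) •
            vecProj (tensorVec ((P q.1).mulVec (a q.2)) ((Q q.1).mulVec (b q.2))))).symm
      _ = ∑ i : Fin (dC * m), ((w (finProdFinEquiv.symm i).1 * p (finProdFinEquiv.symm i).2 : ℝ) : ℂ) •
            vecProj (tensorVec ((P (finProdFinEquiv.symm i).1).mulVec (a (finProdFinEquiv.symm i).2))
              ((Q (finProdFinEquiv.symm i).1).mulVec (b (finProdFinEquiv.symm i).2))) :=
          (Fintype.sum_equiv finProdFinEquiv.symm _ _ (fun i => rfl)).symm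


end
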